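/- For n ≥ 2, the function H is homogeneous: for every x ∈ [0,1]^n and every λ ∈ [0,1], one has H(λx_1,…,λx_n) = λ·H(x_1,…,x_n). -/

import Mathlib

/-- The median of a vector `x : Fin n → ℝ`, computed from a non-decreasing
rearrangement of `x`. -/
noncomputable def med {n : ℕ} (x : Fin n → ℝ) : ℝ :=
  if hn : 0 < n then
    if n % 2 = 1 then (x ∘ Tuple.sort x) ⟨n / 2, by omega⟩
    else ((x ∘ Tuple.sort x) ⟨n / 2 - 1, by omega⟩ +
            (x ∘ Tuple.sort x) ⟨n / 2, by omega⟩) / 2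
  else 0

open Classical in
/-- The median-based weight functions. -/
noncomputable def hw {n : ℕ} (i : Fin n) (x : Fin n → ℝ) : ℝ :=
  if ∃ c : ℝ, ∀ j, x j = c then 1 / (n : ℝ)
  else (1 / ((n : ℝ) - 1)) * (1 - |x i - med x| / ∑ j, |x j - med x|)

/-- The DYOWA function `H` associated to the median-based weight functions. -/
noncomputable def Hmed {n : ℕ} (x : Fin n → ℝ) : ℝ :=
  ∑ i, hw i x * x i

lemma med_smul {n : ℕ} (x : Fin n → ℝ) (lam : ℝ) (hl : 0 ≤ lam) :
    med (fun j => lam * x j) = lam * med x := by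
  unfold med
  by_cases hn : 0 < n
  · have key : (fun j => lam * x j) ∘ Tuple.sort (fun j => lam * x j) =
        (fun j => lam * x j) ∘ Tuple.sort x := by
      symm
      rw [Tuple.comp_sort_eq_comp_iff_monotone]
      intro a b hab
      exact mul_le_mul_of_nonneg_left (Tuple.monotone_sort x hab) hl
    simp only [hn, dif_pos, key]
    split <;> simp [Function.comp] <;> ring
  · simp [hn]

/-- The function `H` is homogeneous. -/
theorem Hmed_homogeneous {n : ℕ} (hn : 2 ≤ n)
    (x : Fin n → ℝ) (hx : ∀ j, x j ∈ Set.Icc (0 : ℝ) 1)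
    (lam : ℝ) (hlam : lam ∈ Set.Icc (0 : ℝ) 1) :
    Hmed (fun j => lam * x j) = lam * Hmed x := by
  rcases eq_or_lt_of_le hlam.1 with h0 | hpos
  · subst h0
    simp [Hmed]
  · unfold Hmed hw
    by_cases hc : ∃ c : ℝ, ∀ j, x j = c
    · have hc' : ∃ c : ℝ, ∀ j, lam * x j = c := by
        obtain ⟨c, hcc⟩ := hc
        exact ⟨lam * c, fun j => by rw [hcc]⟩
      simp only [if_pos hc, if_pos hc', Finset.mul_sum]
      exact Finset.sum_congr rfl fun i _ => by ring
    · have hc' : ¬ ∃ c : ℝ, ∀ j, lam * x j = c := by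
        rintro ⟨c, hcc⟩
        exact hc ⟨c / lam, fun j => by field_simp [← hcc j]; linear_combination hcc j⟩
      have hm := med_smul x lam hpos.le
      have habs : ∀ i, |lam * x i - med (fun j => lam * x j)| = lam * |x i - med x| := by
        intro i
        rw [hm, ← mul_sub, abs_mul, abs_of_pos hpos]
      have hsum : ∑ j, |lam * x j - med (fun k => lam * x k)| = lam * ∑ j, |x j - med x| := by
        rw [Finset.mul_sum]; exact Finset.sum_congr rfl fun j _ => habs j
      have hsum2 : ∑ j, lam * |x j - med x| = lam * ∑ j, |x j - med x| :=
        (Finset.mul_sum ..).symm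
      rw [Finset.mul_sum]
      simp only [if_neg hc, if_neg hc', hsum, habs, hsum2]
      refine Finset.sum_congr rfl fun i _ => ?_
      rw [mul_div_mul_left _ _ hpos.ne']
      ring
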